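/- arXiv:2405.20977 — 2 statements merged into one kernel-verified Lean document; each statement's English description precedes it below -/
import Mathlib

section
/- Let a > 0, δ > 0, p ≥ 1, and let S be a real number. If E = δ·a·(1 + |a·S|^p)^(−1/p)·S, then |E| < δ and a·S = (1 − |E/δ|^p)^(−1/p)·(E/δ). -/
theorem stmt_2 (a δ p S E : ℝ) (ha : 0 < a) (hδ : 0 < δ) (hp : 1 ≤ p)
    (hE : E = δ * a * (1 + |a * S| ^ p) ^ (-(1 / p)) * S) :
    |E| < δ ∧ a * S = (1 - |E / δ| ^ p) ^ (-(1 / p)) * (E / δ) := by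
  have hp0 : (0:ℝ) < p := by linarith
  set u := |a * S| with hu
  have hu0 : 0 ≤ u := abs_nonneg _
  have hup : 0 ≤ u ^ p := Real.rpow_nonneg hu0 p
  have h1 : (0:ℝ) < 1 + u ^ p := by linarith
  set c := (1 + u ^ p) ^ (-(1/p)) with hc
  have hc0 : 0 < c := Real.rpow_pos_of_pos h1 _
  have hEδ : E / δ = c * (a * S) := by
    rw [hE]; field_simp
  have habs : |E / δ| = c * u := by
    rw [hEδ, abs_mul, abs_of_pos hc0, hu]
  have hcp : c ^ p = (1 + u ^ p)⁻¹ := by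
    have he : -(1/p) * p = -1 := by field_simp
    rw [hc, ← Real.rpow_mul h1.le, he, Real.rpow_neg_one]
  have habsp : |E / δ| ^ p = u ^ p * (1 + u ^ p)⁻¹ := by
    rw [habs, Real.mul_rpow hc0.le hu0, hcp]; ring
  have hlt1 : |E / δ| ^ p < 1 := by
    rw [habsp, ← div_eq_mul_inv]
    exact (div_lt_one h1).mpr (by linarith)
  have habs1 : |E / δ| < 1 := by
    by_contra h
    push_neg at h
    have : (1:ℝ) ≤ |E / δ| ^ p := Real.one_le_rpow h hp0.le
    linarith
  constructor
  · rw [abs_div, abs_of_pos hδ, div_lt_one hδ] at habs1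
    linarith
  · have h2 : 1 - |E / δ| ^ p = (1 + u ^ p)⁻¹ := by
      rw [habsp]; field_simp; ring
    have h3 : ((1 + u ^ p)⁻¹) ^ (-(1/p)) = (1 + u ^ p) ^ (1/p) := by
      rw [← Real.rpow_neg_one, ← Real.rpow_mul h1.le]
      norm_num
    rw [h2, h3, hEδ, hc, ← mul_assoc, ← Real.rpow_add h1]
    simp
end

section
/- Let C₀, C₂, δ > 0 with 2C₀δ < 1. Let E be a real symmetric 3×3 matrix with ‖E‖ ≤ C₀δ, let R be a 3×3 orthogonal matrix with ‖R − I‖ ≤ C₂δ, and set F = R·(I+2E)^{1/2} (positive-definite square root). Then ‖F − I‖ ≤ [(3 + 2√3·C₀δ)^{1/2}·C₂ + (1 − 2C₀δ)^(−1/2)·C₀]·δ, where ‖·‖ is the Frobenius norm. -/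
open Matrix

noncomputable def frob (A : Matrix (Fin 3) (Fin 3) ℝ) : ℝ :=
  Real.sqrt (Matrix.trace (A * Aᵀ))

section

open scoped ComplexOrder

/-- The positive semidefinite square root, as `Matrix.PosSemidef.sqrt` was defined in Mathlib
(December 2024); that definition has since been removed from Mathlib. -/
noncomputable def Matrix.PosSemidef.sqrt {n 𝕜 : Type*} [Fintype n] [RCLike 𝕜] [DecidableEq n]
    {A : Matrix n n 𝕜} (hA : A.PosSemidef) : Matrix n n 𝕜 :=
  hA.1.eigenvectorUnitary.1 * diagonal ((↑) ∘ (√·) ∘ hA.1.eigenvalues) *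
    (star hA.1.eigenvectorUnitary : Matrix n n 𝕜)

end

attribute [local instance] Matrix.frobeniusNormedAddCommGroup Matrix.frobeniusNormedRing

lemma frob_eq_norm (A : Matrix (Fin 3) (Fin 3) ℝ) : frob A = ‖A‖ := by
  rw [Matrix.frobenius_norm_def, ← Real.sqrt_eq_rpow]
  unfold frob
  congr 1
  simp [Matrix.trace, Matrix.mul_apply, Matrix.diag, Real.rpow_two, Real.norm_eq_abs, sq_abs, sq]

lemma frob_nonneg (A : Matrix (Fin 3) (Fin 3) ℝ) : 0 ≤ frob A := Real.sqrt_nonneg _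

lemma frob_add_le (A B : Matrix (Fin 3) (Fin 3) ℝ) : frob (A + B) ≤ frob A + frob B := by
  simp only [frob_eq_norm]; exact norm_add_le A B

lemma frob_mul_le (A B : Matrix (Fin 3) (Fin 3) ℝ) : frob (A * B) ≤ frob A * frob B := by
  simp only [frob_eq_norm]; exact Matrix.frobenius_norm_mul A B

lemma frob_conj (V : Matrix (Fin 3) (Fin 3) ℝ) (hV : Vᵀ * V = 1) (d : Fin 3 → ℝ) :
    frob (V * diagonal d * Vᵀ) = Real.sqrt (∑ i, d i ^ 2) := by
  unfold frob
  congr 1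
  have : (V * diagonal d * Vᵀ) * (V * diagonal d * Vᵀ)ᵀ
      = V * (diagonal d * diagonal d) * Vᵀ := by
    simp only [Matrix.transpose_mul, Matrix.transpose_transpose, Matrix.diagonal_transpose]
    calc V * diagonal d * Vᵀ * (V * (diagonal d * Vᵀ))
        = V * diagonal d * (Vᵀ * V) * (diagonal d * Vᵀ) := by noncomm_ring
      _ = V * (diagonal d * diagonal d) * Vᵀ := by rw [hV]; noncomm_ring
  rw [this, Matrix.trace_mul_cycle, ← Matrix.mul_assoc, hV, Matrix.one_mul,
    Matrix.diagonal_mul_diagonal, Matrix.trace_diagonal]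
  exact Finset.sum_congr rfl fun i _ => (sq (d i)).symm

lemma sqrt_decomp (A : Matrix (Fin 3) (Fin 3) ℝ) (hA : A.PosSemidef) :
    hA.sqrt = (hA.1.eigenvectorUnitary : Matrix (Fin 3) (Fin 3) ℝ)
      * diagonal (fun i => Real.sqrt (hA.1.eigenvalues i))
      * (hA.1.eigenvectorUnitary : Matrix (Fin 3) (Fin 3) ℝ)ᵀ := by
  rw [Matrix.PosSemidef.sqrt, ← Matrix.conjTranspose_eq_transpose_of_trivial]
  rfl

lemma spec_decomp (A : Matrix (Fin 3) (Fin 3) ℝ) (hA : A.PosSemidef) :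
    A = (hA.1.eigenvectorUnitary : Matrix (Fin 3) (Fin 3) ℝ)
      * diagonal hA.1.eigenvalues
      * (hA.1.eigenvectorUnitary : Matrix (Fin 3) (Fin 3) ℝ)ᵀ := by
  rw [← Matrix.conjTranspose_eq_transpose_of_trivial]
  have := hA.1.spectral_theorem
  rw [Unitary.conjStarAlgAut_apply] at this
  exact this

lemma unit_left (A : Matrix (Fin 3) (Fin 3) ℝ) (hA : A.PosSemidef) :
    (hA.1.eigenvectorUnitary : Matrix (Fin 3) (Fin 3) ℝ)ᵀ
      * (hA.1.eigenvectorUnitary : Matrix (Fin 3) (Fin 3) ℝ) = 1 := by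
  rw [← Matrix.conjTranspose_eq_transpose_of_trivial, ← Matrix.star_eq_conjTranspose]
  exact (Unitary.mem_iff.mp hA.1.eigenvectorUnitary.2).1

lemma unit_right (A : Matrix (Fin 3) (Fin 3) ℝ) (hA : A.PosSemidef) :
    (hA.1.eigenvectorUnitary : Matrix (Fin 3) (Fin 3) ℝ)
      * (hA.1.eigenvectorUnitary : Matrix (Fin 3) (Fin 3) ℝ)ᵀ = 1 := by
  rw [← Matrix.conjTranspose_eq_transpose_of_trivial, ← Matrix.star_eq_conjTranspose]
  exact (Unitary.mem_iff.mp hA.1.eigenvectorUnitary.2).2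

lemma sum3_le (x y z : ℝ) :
    x + y + z ≤ Real.sqrt 3 * Real.sqrt (x ^ 2 + y ^ 2 + z ^ 2) := by
  have h1 : x + y + z ≤ Real.sqrt ((x + y + z) ^ 2) := by
    rw [Real.sqrt_sq_eq_abs]; exact le_abs_self _
  have h2 : Real.sqrt ((x + y + z) ^ 2) ≤ Real.sqrt (3 * (x ^ 2 + y ^ 2 + z ^ 2)) :=
    Real.sqrt_le_sqrt (by nlinarith [sq_nonneg (x - y), sq_nonneg (y - z), sq_nonneg (x - z)])
  calc x + y + z ≤ Real.sqrt ((x + y + z) ^ 2) := h1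
    _ ≤ Real.sqrt (3 * (x ^ 2 + y ^ 2 + z ^ 2)) := h2
    _ = Real.sqrt 3 * Real.sqrt (x ^ 2 + y ^ 2 + z ^ 2) := Real.sqrt_mul (by norm_num) _

theorem stmt_10 (C₀ C₂ δ : ℝ) (hC₀ : 0 < C₀) (hC₂ : 0 < C₂) (hδ : 0 < δ)
    (hsmall : 2 * C₀ * δ < 1)
    (E : Matrix (Fin 3) (Fin 3) ℝ) (hsym : E.IsSymm) (hE : frob E ≤ C₀ * δ)
    (hpsd : ((1 : Matrix (Fin 3) (Fin 3) ℝ) + (2 : ℝ) • E).PosSemidef)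
    (R : Matrix (Fin 3) (Fin 3) ℝ) (hR : R * Rᵀ = 1) (hRI : frob (R - 1) ≤ C₂ * δ)
    (F : Matrix (Fin 3) (Fin 3) ℝ) (hF : F = R * hpsd.sqrt) :
    frob (F - 1) ≤
      (Real.sqrt (3 + 2 * Real.sqrt 3 * (C₀ * δ)) * C₂
        + (1 - 2 * C₀ * δ) ^ (-(1 / 2) : ℝ) * C₀) * δ := by
  set A : Matrix (Fin 3) (Fin 3) ℝ := (1 : Matrix (Fin 3) (Fin 3) ℝ) + (2 : ℝ) • E with hAdef
  set U : Matrix (Fin 3) (Fin 3) ℝ := (hpsd.1.eigenvectorUnitary : Matrix (Fin 3) (Fin 3) ℝ)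
  set μ : Fin 3 → ℝ := hpsd.1.eigenvalues
  have hU1 : Uᵀ * U = 1 := unit_left A hpsd
  have hU2 : U * Uᵀ = 1 := unit_right A hpsd
  have hspec : A = U * diagonal μ * Uᵀ := spec_decomp A hpsd
  have hS : hpsd.sqrt = U * diagonal (fun i => Real.sqrt (μ i)) * Uᵀ := sqrt_decomp A hpsd
  set a : ℝ := C₀ * δ with hadef
  have ha : 0 < a := mul_pos hC₀ hδ
  set b : ℝ := 1 - 2 * a with hbdef
  have hb : 0 < b := by simp only [hbdef]; linarith [hsmall]
  set e : Fin 3 → ℝ := fun i => (μ i - 1) / 2 with hedef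
  -- E decomposition
  have hconj_one : U * (1 : Matrix (Fin 3) (Fin 3) ℝ) * Uᵀ = 1 := by rw [Matrix.mul_one, hU2]
  have hEdec : E = U * diagonal e * Uᵀ := by
    have h2 : (2 : ℝ) • (U * diagonal e * Uᵀ) = (2 : ℝ) • E := by
      have hd : ((2:ℝ) • diagonal e : Matrix (Fin 3) (Fin 3) ℝ)
          = diagonal μ - 1 := by
        ext i j
        by_cases h : i = j
        · subst h; simp [Matrix.one_apply, hedef]; ring
        · simp [Matrix.diagonal_apply_ne _ h, Matrix.one_apply_ne h]
      calc (2 : ℝ) • (U * diagonal e * Uᵀ) = U * ((2:ℝ) • diagonal e) * Uᵀ := by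
            rw [Matrix.mul_smul, Matrix.smul_mul]
        _ = U * (diagonal μ - 1) * Uᵀ := by rw [hd]
        _ = U * diagonal μ * Uᵀ - U * 1 * Uᵀ := by
            rw [Matrix.mul_sub, Matrix.sub_mul]
        _ = A - 1 := by rw [← hspec, hconj_one]
        _ = (2 : ℝ) • E := by rw [hAdef]; abel
    have := smul_right_injective (Matrix (Fin 3) (Fin 3) ℝ) (two_ne_zero (α := ℝ)) h2
    exact this.symm
  have hfrobE : frob E = Real.sqrt (∑ i, e i ^ 2) := by rw [hEdec, frob_conj U hU1 e]
  have hsum_nonneg : (0:ℝ) ≤ ∑ i, e i ^ 2 := Finset.sum_nonneg fun i _ => sq_nonneg _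
  have he2 : ∑ i, e i ^ 2 ≤ a ^ 2 := by
    have := Real.sq_sqrt hsum_nonneg
    nlinarith [hE, hfrobE, Real.sqrt_nonneg (∑ i, e i ^ 2)]
  have hei : ∀ i, e i ^ 2 ≤ a ^ 2 := by
    intro i
    have : e i ^ 2 ≤ ∑ j, e j ^ 2 :=
      Finset.single_le_sum (fun j _ => sq_nonneg (e j)) (Finset.mem_univ i)
    linarith
  have hμe : ∀ i, μ i = 1 + 2 * e i := by intro i; simp [hedef]; ring
  have hμlb : ∀ i, b ≤ μ i := by
    intro i
    have h := hei i
    rw [hμe i, hbdef]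
    nlinarith [sq_nonneg (e i + a)]
  have hμ0 : ∀ i, 0 ≤ μ i := fun i => le_trans hb.le (hμlb i)
  -- bound on frob sqrt
  have hfrobS : frob hpsd.sqrt ≤ Real.sqrt (3 + 2 * Real.sqrt 3 * a) := by
    rw [hS, frob_conj U hU1]
    apply Real.sqrt_le_sqrt
    have hsq : ∀ i, Real.sqrt (μ i) ^ 2 = μ i := fun i => Real.sq_sqrt (hμ0 i)
    have hsum : ∑ i, Real.sqrt (μ i) ^ 2 = 3 + 2 * (e 0 + e 1 + e 2) := by
      rw [Fin.sum_univ_three, hsq 0, hsq 1, hsq 2, hμe 0, hμe 1, hμe 2]; ring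
    rw [hsum]
    have h1 : e 0 + e 1 + e 2 ≤ Real.sqrt 3 * Real.sqrt (e 0 ^ 2 + e 1 ^ 2 + e 2 ^ 2) :=
      sum3_le _ _ _
    have h2 : Real.sqrt (e 0 ^ 2 + e 1 ^ 2 + e 2 ^ 2) ≤ a := by
      have : Real.sqrt (∑ i, e i ^ 2) ≤ a := by rw [← hfrobE]; exact hE
      rwa [Fin.sum_univ_three] at this
    have h3 : (0:ℝ) ≤ Real.sqrt 3 := Real.sqrt_nonneg 3
    nlinarith
  -- bound on frob (sqrt - 1)
  have hSsub : hpsd.sqrt - 1 = U * diagonal (fun i => Real.sqrt (μ i) - 1) * Uᵀ := by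
    have hd : (diagonal (fun i => Real.sqrt (μ i) - 1) : Matrix (Fin 3) (Fin 3) ℝ)
        = diagonal (fun i => Real.sqrt (μ i)) - 1 := by
      rw [← Matrix.diagonal_one, ← Matrix.diagonal_sub]
    rw [hd, Matrix.mul_sub, Matrix.sub_mul, ← hS, hconj_one]
  have hpt : ∀ i, (Real.sqrt (μ i) - 1) ^ 2 * b ≤ e i ^ 2 := by
    intro i
    set u := Real.sqrt (μ i) with hu
    set t := Real.sqrt b with ht
    have hu2 : u ^ 2 = μ i := Real.sq_sqrt (hμ0 i)
    have ht2 : t ^ 2 = b := Real.sq_sqrt hb.le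
    have htu : t ≤ u := Real.sqrt_le_sqrt (hμlb i)
    have ht0 : 0 ≤ t := Real.sqrt_nonneg _
    have ht1 : t ≤ 1 := by
      rw [ht, show (1:ℝ) = Real.sqrt 1 from Real.sqrt_one.symm]
      exact Real.sqrt_le_sqrt (by simp only [hbdef]; linarith)
    have hgoal : (u - 1) ^ 2 * t ^ 2 ≤ ((u ^ 2 - 1) / 2) ^ 2 := by
      have h1 : 0 ≤ u + 1 - 2 * t := by linarith
      have h2 : 0 ≤ u + 1 + 2 * t := by linarith
      nlinarith [mul_nonneg (mul_nonneg (sq_nonneg (u - 1)) h1) h2]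
    have hee : e i = (u ^ 2 - 1) / 2 := by rw [hu2]
    rw [hee, ← ht2]
    exact hgoal
  have hfrobS1 : frob (hpsd.sqrt - 1) ≤ b ^ (-(1 / 2) : ℝ) * a := by
    rw [hSsub, frob_conj U hU1]
    have hsum1 : ∑ i, (Real.sqrt (μ i) - 1) ^ 2 ≤ a ^ 2 / b := by
      rw [le_div_iff₀ hb, Finset.sum_mul]
      calc ∑ i, (Real.sqrt (μ i) - 1) ^ 2 * b ≤ ∑ i, e i ^ 2 :=
            Finset.sum_le_sum fun i _ => hpt i
        _ ≤ a ^ 2 := he2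
    have hrw : b ^ (-(1 / 2) : ℝ) * a = Real.sqrt (a ^ 2 / b) := by
      rw [Real.sqrt_div (sq_nonneg a), Real.sqrt_sq ha.le,
        Real.rpow_neg hb.le, ← Real.sqrt_eq_rpow]
      ring
    rw [hrw]
    exact Real.sqrt_le_sqrt hsum1
  -- assemble
  have hdecomp : F - 1 = (R - 1) * hpsd.sqrt + (hpsd.sqrt - 1) := by
    rw [hF]; noncomm_ring
  calc frob (F - 1) = frob ((R - 1) * hpsd.sqrt + (hpsd.sqrt - 1)) := by rw [hdecomp]
    _ ≤ frob ((R - 1) * hpsd.sqrt) + frob (hpsd.sqrt - 1) := frob_add_le _ _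
    _ ≤ frob (R - 1) * frob hpsd.sqrt + frob (hpsd.sqrt - 1) := by
        linarith [frob_mul_le (R - 1) hpsd.sqrt]
    _ ≤ (C₂ * δ) * Real.sqrt (3 + 2 * Real.sqrt 3 * a) + b ^ (-(1 / 2) : ℝ) * a := by
        have h1 : frob (R - 1) * frob hpsd.sqrt
            ≤ (C₂ * δ) * Real.sqrt (3 + 2 * Real.sqrt 3 * a) :=
          mul_le_mul hRI hfrobS (frob_nonneg _) (by positivity)
        linarith [hfrobS1]
    _ = (Real.sqrt (3 + 2 * Real.sqrt 3 * (C₀ * δ)) * C₂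
        + (1 - 2 * C₀ * δ) ^ (-(1 / 2) : ℝ) * C₀) * δ := by
        rw [hadef, hbdef, hadef]
        ring
end
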